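/- Let M = (Q, E, δ) be an MDP and U ⊆ Q an end-component. Let σ_U be the memoryless strategy that at every history ending in a state s ∈ U ∩ Q₁ plays the uniform distribution on E(s) ∩ U (and at histories ending in a state s ∈ Q₁ \ U plays the uniform distribution on E(s)). Then for every s ∈ U, P_s^{σ_U}({ρ | Inf(ρ) = U}) = 1. -/

import Mathlib

open MeasureTheory Filter
open scoped Classical ENNReal

namespace MPP

/-- A Markov decision process: states `Q`, player-1 states `Q1` (the rest are
probabilistic), edge relation `E` with every state having a successor, and a
probabilistic transition function `δ` whose support at every probabilistic state
is exactly the set of successors. -/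
structure MDP (Q : Type) where
  Q1 : Set Q
  E : Q → Q → Prop
  E_nonempty : ∀ q, ∃ q', E q q'
  δ : Q → PMF Q
  δ_support : ∀ q, q ∉ Q1 → ∀ q', q' ∈ (δ q).support ↔ E q q'

/-- A strategy: given the history `h` (the states strictly before the current one)
and the current state `q`, if `q` is a player-1 state it selects a distribution on
successors of `q`. -/
structure Strategy {Q : Type} (M : MDP Q) where
  act : List Q → Q → PMF Q
  act_support : ∀ h q, q ∈ M.Q1 → ∀ q', q' ∈ (act h q).support → M.E q q'

variable {Q : Type}

/-- One step of the history-dependent transition kernel. -/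
noncomputable def MDP.step (M : MDP Q) (σ : Strategy M) (h : List Q) (q : Q) : PMF Q :=
  if q ∈ M.Q1 then σ.act h q else M.δ q

/-- Probability of traversing the finite sequence `future` starting at `q` with
past history `h`. -/
noncomputable def pathProb (M : MDP Q) (σ : Strategy M) : List Q → Q → List Q → ℝ≥0∞
  | _, _, [] => 1
  | h, q, q' :: rest => M.step σ h q q' * pathProb M σ (h ++ [q]) q' rest

/-- `μ` is the trajectory measure (Ionescu–Tulcea) on plays of `M` under strategy
`σ`, starting at `q`: it is the (unique) probability measure on `ℕ → Q` (product
σ-algebra) giving every cylinder its product probability. -/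
def IsTrajMeasure [MeasurableSpace Q] (M : MDP Q) (σ : Strategy M) (q : Q)
    (μ : Measure (ℕ → Q)) : Prop :=
  IsProbabilityMeasure μ ∧
    ∀ (n : ℕ) (f : ℕ → Q),
      μ {ρ | ∀ i ≤ n, ρ i = f i} =
        if f 0 = q then pathProb M σ [] q ((List.range n).map fun i => f (i + 1)) else 0

/-- The set of states occurring infinitely often in a play. -/
def infSet (ρ : ℕ → Q) : Set Q := {s | ∀ N, ∃ n, N ≤ n ∧ ρ n = s}

/-- End-component: nonempty, closed under probabilistic transitions, every state has
a successor inside, and strongly connected inside. -/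
def MDP.IsEndComponent (M : MDP Q) (U : Set Q) : Prop :=
  U.Nonempty ∧
    (∀ q ∈ U, q ∉ M.Q1 → (M.δ q).support ⊆ U) ∧
    (∀ q ∈ U, ∃ q' ∈ U, M.E q q') ∧
    ∀ q ∈ U, ∀ q' ∈ U, Relation.ReflTransGen (fun a b => a ∈ U ∧ b ∈ U ∧ M.E a b) q q'

/-- Energy level of the length-`n` prefix of a play. -/
def EL (w : Q → Q → ℤ) (ρ : ℕ → Q) (n : ℕ) : ℤ :=
  ∑ i ∈ Finset.range n, w (ρ i) (ρ (i + 1))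

/-- Mean payoff (liminf of averages) of a play. -/
noncomputable def MP (w : Q → Q → ℤ) (ρ : ℕ → Q) : ℝ :=
  liminf (fun n => (EL w ρ n : ℝ) / n) atTop

/-- Parity objective: the minimal priority visited infinitely often is even. -/
def ParitySet (p : Q → ℕ) : Set (ℕ → Q) := {ρ | Even (sInf (p '' infSet ρ))}

def MeanPayoffGe (w : Q → Q → ℤ) (ν : ℝ) : Set (ℕ → Q) := {ρ | ν ≤ MP w ρ}

def MeanPayoffGt (w : Q → Q → ℤ) (ν : ℝ) : Set (ℕ → Q) := {ρ | ν < MP w ρ}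

/-- Energy objective with initial credit `c₀`. -/
def PosEnergy (w : Q → Q → ℤ) (c₀ : ℕ) : Set (ℕ → Q) :=
  {ρ | ∀ n, 0 ≤ (c₀ : ℤ) + EL w ρ n}

/-- Büchi objective: some state of `B` is visited infinitely often. -/
def Buchi (B : Set Q) : Set (ℕ → Q) := {ρ | (infSet ρ ∩ B).Nonempty}

/-- Expected mean-payoff value: supremum over strategies of the expectation of the
mean payoff under the trajectory measure. -/
noncomputable def ValMP [MeasurableSpace Q] (M : MDP Q) (w : Q → Q → ℤ) (q : Q) : ℝ :=
  sSup {x | ∃ σ : Strategy M, ∃ μ : Measure (ℕ → Q),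
    IsTrajMeasure M σ q μ ∧ x = ∫ ρ, MP w ρ ∂μ}



/-! ### Auxiliary machinery for the proof -/

section Aux

/-- Product of transition probabilities along a list of successive states. -/
noncomputable def pp (p : Q → Q → ℝ≥0∞) : Q → List Q → ℝ≥0∞
  | _, [] => 1
  | q, a :: l => p q a * pp p a l

/-- Sum, over all paths of length `n` whose `i`-th step satisfies `Av i`, of the
product of transition probabilities. -/
noncomputable def gsum [Fintype Q] (p : Q → Q → ℝ≥0∞) : (ℕ → Q → Prop) → Q → ℕ → ℝ≥0∞
  | _, _, 0 => 1
  | Av, q, n+1 => ∑ a ∈ Finset.univ.filter (Av 0), p q a * gsum p (fun i => Av (i+1)) a n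

/-- The avoidance predicate. -/
def Aav (u : Q) : ℕ → Q → Prop := fun _ a => a ≠ u

theorem aav_shift (u : Q) : (fun i => Aav u (i+1)) = Aav u := rfl

theorem filter_aav [Fintype Q] (u : Q) :
    Finset.univ.filter (Aav u 0) = (Finset.univ : Finset Q).erase u := by
  ext a; simp [Aav, Finset.mem_erase, and_comm]

theorem pp_le_one {p : Q → Q → ℝ≥0∞} (hp : ∀ a b, p a b ≤ 1) :
    ∀ (l : List Q) (q : Q), pp p q l ≤ 1
  | [], _ => le_refl _
  | a :: l, q => by
    rw [pp]
    calc p q a * pp p a l ≤ 1 * 1 := mul_le_mul' (hp q a) (pp_le_one hp l a)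
    _ = 1 := one_mul _

theorem pp_ge_pow {p : Q → Q → ℝ≥0∞} {ε : ℝ≥0∞} :
    ∀ (l : List Q) (q : Q), List.Chain (fun a b => ε ≤ p a b) q l →
      ε ^ l.length ≤ pp p q l
  | [], _, _ => by simp [pp]
  | a :: l, q, hch => by
    rw [List.Chain, List.chain_cons] at hch
    rw [pp, List.length_cons, pow_succ, mul_comm]
    exact mul_le_mul' hch.1 (pp_ge_pow l a hch.2)

theorem gsum_congr [Fintype Q] {p : Q → Q → ℝ≥0∞} :
    ∀ (n : ℕ) (Av Av' : ℕ → Q → Prop) (q : Q), (∀ i a, Av i a ↔ Av' i a) →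
      gsum p Av q n = gsum p Av' q n
  | 0, _, _, _, _ => rfl
  | n+1, Av, Av', q, h => by
    rw [gsum, gsum]
    have hf : Finset.univ.filter (Av 0) = Finset.univ.filter (Av' 0) := by
      apply Finset.filter_congr; intro a _; simp [h 0 a]
    rw [hf]
    exact Finset.sum_congr rfl fun a _ => by
      rw [gsum_congr n (fun i => Av (i+1)) (fun i => Av' (i+1)) a (fun i b => h (i+1) b)]

theorem gsum_le_one [Fintype Q] {p : Q → Q → ℝ≥0∞} (hp1 : ∀ q, ∑ a, p q a = 1) :
    ∀ (n : ℕ) (Av : ℕ → Q → Prop) (q : Q), gsum p Av q n ≤ 1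
  | 0, _, _ => le_refl _
  | n+1, Av, q => by
    rw [gsum]
    calc ∑ a ∈ Finset.univ.filter (Av 0), p q a * gsum p (fun i => Av (i+1)) a n
        ≤ ∑ a ∈ Finset.univ.filter (Av 0), p q a := by
          exact Finset.sum_le_sum fun a _ => by
            calc p q a * gsum p (fun i => Av (i+1)) a n ≤ p q a * 1 :=
              mul_le_mul_right (gsum_le_one hp1 n _ a) _
            _ = p q a := mul_one _
    _ ≤ ∑ a, p q a := Finset.sum_le_sum_of_subset (Finset.filter_subset _ _)
    _ = 1 := hp1 q

theorem gsum_hit [Fintype Q] {p : Q → Q → ℝ≥0∞} (hp1 : ∀ q, ∑ a, p q a = 1)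
    (hple : ∀ a b, p a b ≤ 1) (u : Q) :
    ∀ (l : List Q) (hne : l ≠ []) (q : Q) (n : ℕ),
      l.getLast hne = u → l.length ≤ n →
      gsum p (Aav u) q n + pp p q l ≤ 1 := by
  intro l
  induction l with
  | nil => intro hne; exact absurd rfl hne
  | cons a t ih =>
    intro _ q n hlast hlen
    obtain ⟨m, rfl⟩ : ∃ m, n = m + 1 := by
      cases n with
      | zero => simp at hlen
      | succ m => exact ⟨m, rfl⟩
    rw [gsum, aav_shift, filter_aav]
    have hbound : ∀ x : Q, p q x * gsum p (Aav u) x m ≤ p q x := fun x =>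
      (mul_le_mul_right (gsum_le_one hp1 m _ x) _).trans (le_of_eq (mul_one _))
    rcases t.eq_nil_or_concat with rfl | _
    · have hau : a = u := hlast
      subst hau
      rw [pp, pp, mul_one]
      calc (∑ x ∈ Finset.univ.erase a, p q x * gsum p (Aav a) x m) + p q a
          ≤ (∑ x ∈ Finset.univ.erase a, p q x) + p q a :=
            add_le_add_left (Finset.sum_le_sum fun x _ => hbound x) _
        _ = ∑ x, p q x := Finset.sum_erase_add _ _ (Finset.mem_univ a)
        _ = 1 := hp1 q
    · have htne : t ≠ [] := by rintro rfl; simp_all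
      have hlast' : t.getLast htne = u := by
        rw [List.getLast_cons htne] at hlast; exact hlast
      have hlen' : t.length ≤ m := by simpa [List.length_cons] using hlen
      rw [pp]
      by_cases hau : a = u
      · subst hau
        have hppa : p q a * pp p a t ≤ p q a :=
          (mul_le_mul_right (pp_le_one hple t a) _).trans (le_of_eq (mul_one _))
        calc (∑ x ∈ Finset.univ.erase a, p q x * gsum p (Aav a) x m) + p q a * pp p a t
            ≤ (∑ x ∈ Finset.univ.erase a, p q x) + p q a :=
              add_le_add (Finset.sum_le_sum fun x _ => hbound x) hppa
          _ = ∑ x, p q x := Finset.sum_erase_add _ _ (Finset.mem_univ a)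
          _ = 1 := hp1 q
      · have hmem : a ∈ (Finset.univ : Finset Q).erase u :=
          Finset.mem_erase.2 ⟨hau, Finset.mem_univ a⟩
        have hsplit : (∑ x ∈ Finset.univ.erase u, p q x * gsum p (Aav u) x m)
            = p q a * gsum p (Aav u) a m
              + ∑ x ∈ (Finset.univ.erase u).erase a, p q x * gsum p (Aav u) x m :=
          (Finset.add_sum_erase _ _ hmem).symm
        rw [hsplit]
        have key : p q a * gsum p (Aav u) a m + p q a * pp p a t ≤ p q a := by
          rw [← mul_add]
          calc p q a * (gsum p (Aav u) a m + pp p a t) ≤ p q a * 1 :=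
            mul_le_mul_right (ih htne a m hlast' hlen') _
          _ = p q a := mul_one _
        calc p q a * gsum p (Aav u) a m
              + (∑ x ∈ (Finset.univ.erase u).erase a, p q x * gsum p (Aav u) x m)
              + p q a * pp p a t
            = (p q a * gsum p (Aav u) a m + p q a * pp p a t)
              + ∑ x ∈ (Finset.univ.erase u).erase a, p q x * gsum p (Aav u) x m := by ring
          _ ≤ p q a + ∑ x ∈ (Finset.univ.erase u).erase a, p q x :=
              add_le_add key (Finset.sum_le_sum fun x _ => hbound x)
          _ = ∑ x ∈ Finset.univ.erase u, p q x :=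
              Finset.add_sum_erase _ _ hmem
          _ ≤ ∑ x, p q x := Finset.sum_le_sum_of_subset (Finset.erase_subset _ _)
          _ = 1 := hp1 q

theorem gsum_window [Fintype Q] {p : Q → Q → ℝ≥0∞} {U : Set Q}
    (hcl : ∀ q ∈ U, ∀ a, p q a ≠ 0 → a ∈ U) {u : Q} {m : ℕ} {C : ℝ≥0∞}
    (hC : ∀ a ∈ U, gsum p (Aav u) a m ≤ C) :
    ∀ (n : ℕ) (q : Q), q ∈ U → gsum p (Aav u) q (n + m) ≤ C * gsum p (Aav u) q n := by
  intro n
  induction n with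
  | zero => intro q hq; simpa [gsum] using hC q hq
  | succ n ih =>
    intro q hq
    have hnm : n + 1 + m = (n + m) + 1 := by ring
    rw [hnm, gsum, aav_shift, gsum, aav_shift, Finset.mul_sum]
    apply Finset.sum_le_sum
    intro a _
    by_cases hz : p q a = 0
    · simp [hz]
    · calc p q a * gsum p (Aav u) a (n + m) ≤ p q a * (C * gsum p (Aav u) a n) :=
        mul_le_mul_right (ih a (hcl q hq a hz)) _
      _ = C * (p q a * gsum p (Aav u) a n) := by ring

theorem gsum_window_pow [Fintype Q] {p : Q → Q → ℝ≥0∞} {U : Set Q}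
    (hp1 : ∀ q, ∑ a, p q a = 1)
    (hcl : ∀ q ∈ U, ∀ a, p q a ≠ 0 → a ∈ U) {u : Q} {m : ℕ} {C : ℝ≥0∞}
    (hC : ∀ a ∈ U, gsum p (Aav u) a m ≤ C) :
    ∀ (K : ℕ) (q : Q), q ∈ U → gsum p (Aav u) q (m * K) ≤ C ^ K := by
  intro K
  induction K with
  | zero => intro q hq; simp [gsum]
  | succ K ih =>
    intro q hq
    have hmm : m * (K + 1) = m * K + m := by ring
    rw [hmm, pow_succ]
    calc gsum p (Aav u) q (m * K + m) ≤ C * gsum p (Aav u) q (m * K) :=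
      gsum_window hcl hC (m * K) q hq
    _ ≤ C * C ^ K := mul_le_mul_right (ih q hq) _
    _ = C ^ K * C := mul_comm _ _

theorem gsum_free [Fintype Q] {p : Q → Q → ℝ≥0∞} {U : Set Q}
    (hp1 : ∀ q, ∑ a, p q a = 1)
    (hcl : ∀ q ∈ U, ∀ a, p q a ≠ 0 → a ∈ U) {u : Q} {r : ℕ} {C : ℝ≥0∞}
    (hC : ∀ a ∈ U, gsum p (Aav u) a r ≤ C) :
    ∀ (m : ℕ) (q : Q), q ∈ U →
      gsum p (fun i a => m ≤ i → a ≠ u) q (m + r) ≤ C := by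
  intro m
  induction m with
  | zero =>
    intro q hq
    have h := gsum_congr (p := p) (0 + r) (fun i a => 0 ≤ i → a ≠ u) (Aav u) q
      (fun i a => by simp [Aav])
    rw [h]
    simpa using hC q hq
  | succ m ih =>
    intro q hq
    have hstep : m + 1 + r = (m + r) + 1 := by ring
    rw [hstep, gsum]
    have hsh : ∀ a : Q,
        gsum p (fun i a => m + 1 ≤ i + 1 → a ≠ u) a (m + r)
        = gsum p (fun i a => m ≤ i → a ≠ u) a (m + r) :=
      fun a => gsum_congr _ _ _ a (fun i b => by constructor <;> (intro h hh; exact h (by omega)))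
    refine le_trans (Finset.sum_le_sum (g := fun a => p q a * C) (fun a _ => ?_)) ?_
    · by_cases hz : p q a = 0
      · simp [hz]
      · exact mul_le_mul_right (le_of_eq_of_le (hsh a) (ih a (hcl q hq a hz))) _
    · refine le_trans (Finset.sum_le_sum_of_subset (Finset.subset_univ _)) ?_
      rw [← Finset.sum_mul, hp1 q, one_mul]

theorem gsum_constU [Fintype Q] {p : Q → Q → ℝ≥0∞} {U : Set Q}
    (hp1 : ∀ q, ∑ a, p q a = 1)
    (hz : ∀ q ∈ U, ∀ a, a ∉ U → p q a = 0) :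
    ∀ (n : ℕ) (q : Q), q ∈ U → gsum p (fun _ a => a ∈ U) q n = 1 := by
  intro n
  induction n with
  | zero => intro q hq; rfl
  | succ n ih =>
    intro q hq
    rw [gsum]
    have hone : ∀ a ∈ Finset.univ.filter (fun a : Q => a ∈ U),
        p q a * gsum p (fun _ a => a ∈ U) a n = p q a := by
      intro a ha
      rw [ih a (by simpa using ha), mul_one]
    rw [Finset.sum_congr rfl hone, Finset.sum_filter]
    rw [← hp1 q]
    apply Finset.sum_congr rfl
    intro a _
    by_cases haU : a ∈ U
    · simp [haU]
    · simp [haU, hz q hq a haU]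

theorem FS_eq [Fintype Q] {p : Q → Q → ℝ≥0∞} :
    ∀ (n : ℕ) (Av : ℕ → Q → Prop) (q : Q),
      (∑ g : Fin n → Q, if (∀ i : Fin n, Av i (g i)) then pp p q (List.ofFn g) else 0)
      = gsum p Av q n := by
  intro n
  induction n with
  | zero =>
    intro Av q
    rw [show (gsum p Av q 0) = 1 from rfl]
    rw [Fintype.sum_eq_single (fun i : Fin 0 => q)
      (fun g hg => absurd (funext fun i => i.elim0) hg)]
    simp [pp]
  | succ n ih =>
    intro Av q
    rw [gsum, Finset.sum_filter]
    rw [← Equiv.sum_comp (Fin.consEquiv (fun _ : Fin (n+1) => Q))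
      (fun g => if (∀ i : Fin (n+1), Av i (g i)) then pp p q (List.ofFn g) else 0)]
    rw [Fintype.sum_prod_type]
    apply Finset.sum_congr rfl
    intro a _
    have hcond : ∀ g : Fin n → Q,
        (∀ i : Fin (n+1), Av i ((Fin.cons a g : Fin (n+1) → Q) i)) ↔
          (Av 0 a ∧ ∀ i : Fin n, Av (i+1) (g i)) := by
      intro g
      rw [Fin.forall_fin_succ]
      simp [Fin.cons_zero, Fin.cons_succ]
    have hlist : ∀ g : Fin n → Q,
        List.ofFn (Fin.cons a g : Fin (n+1) → Q) = a :: List.ofFn g := by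
      intro g
      rw [List.ofFn_succ]
      simp [Fin.cons_zero, Fin.cons_succ]
    by_cases hA : Av 0 a
    · rw [if_pos hA, ← ih (fun i => Av (i+1)) a, Finset.mul_sum]
      apply Finset.sum_congr rfl
      intro g _
      simp only [Fin.consEquiv_apply, hlist g, pp]
      by_cases hg : ∀ i : Fin n, Av (i+1) (g i)
      · rw [if_pos ((hcond g).2 ⟨hA, hg⟩), if_pos hg]
        rw [show ((Fin.consEquiv fun _ : Fin (n+1) => Q) (a, g)) = Fin.cons a g from rfl,
          hlist g, pp]
      · rw [if_neg (fun h => hg ((hcond g).1 h).2), if_neg hg, mul_zero]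
    · rw [if_neg hA]
      apply Finset.sum_eq_zero
      intro g _
      simp only [Fin.consEquiv_apply]
      rw [if_neg (fun h => hA ((hcond g).1 h).1)]

theorem step_const (M : MDP Q) (σ : Strategy M)
    (hm : ∀ h h' q, σ.act h q = σ.act h' q) (h : List Q) (q : Q) :
    M.step σ h q = M.step σ [] q := by
  unfold MDP.step
  by_cases hq : q ∈ M.Q1
  · rw [if_pos hq, if_pos hq, hm h [] q]
  · rw [if_neg hq, if_neg hq]

theorem pathProb_pp (M : MDP Q) (σ : Strategy M)
    (hm : ∀ h h' q, σ.act h q = σ.act h' q) :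
    ∀ (l : List Q) (h : List Q) (q : Q),
      pathProb M σ h q l = pp (fun a b => M.step σ [] a b) q l
  | [], _, _ => rfl
  | a :: l, h, q => by
    rw [pathProb, pp, step_const M σ hm h q, pathProb_pp M σ hm l (h ++ [q]) a]

theorem bridge [Fintype Q] [MeasurableSpace Q] [MeasurableSingletonClass Q]
    (M : MDP Q) (σ : Strategy M) (hm : ∀ h h' q, σ.act h q = σ.act h' q)
    (s : Q) (μ : Measure (ℕ → Q)) (hμ : IsTrajMeasure M σ s μ)
    (n : ℕ) (Av : ℕ → Q → Prop) :
    μ {ρ | ∀ i < n, Av i (ρ (i+1))} =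
      gsum (fun a b => M.step σ [] a b) Av s n := by
  set p : Q → Q → ℝ≥0∞ := fun a b => M.step σ [] a b with hp
  have hlt : ∀ i : ℕ, min i n < n + 1 := fun i => by omega
  set ext : (Fin (n+1) → Q) → ℕ → Q := fun h i => h ⟨min i n, hlt i⟩ with hext
  set Cyl : (Fin (n+1) → Q) → Set (ℕ → Q) := fun h => {ρ | ∀ i ≤ n, ρ i = ext h i}
    with hCyl
  set T : Finset (Fin (n+1) → Q) :=
    Finset.univ.filter (fun h => ∀ i : Fin n, Av i (h i.succ)) with hT
  have hev : {ρ : ℕ → Q | ∀ i < n, Av i (ρ (i+1))} = ⋃ h ∈ T, Cyl h := by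
    ext ρ
    simp only [Set.mem_setOf_eq, Set.mem_iUnion]
    constructor
    · intro hρ
      refine ⟨fun i => ρ i.val, ?_, ?_⟩
      · rw [hT, Finset.mem_filter]
        exact ⟨Finset.mem_univ _, fun i => hρ i.val i.isLt⟩
      · intro i hi
        show ρ i = ρ (min i n)
        rw [min_eq_left hi]
    · rintro ⟨h, hhT, hρ⟩
      intro i hi
      have hρi := hρ (i+1) (by omega)
      rw [hρi]
      rw [hT, Finset.mem_filter] at hhT
      have h2 := hhT.2 ⟨i, hi⟩
      have hem : ext h (i+1) = h (Fin.succ ⟨i, hi⟩) := by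
        show h ⟨min (i+1) n, _⟩ = h ⟨i+1, _⟩
        congr 1
        exact Fin.ext (by simp; omega)
      rw [hem]
      exact h2
  have hmeas : ∀ h : Fin (n+1) → Q, MeasurableSet (Cyl h) := by
    intro h
    have hrw : Cyl h = ⋂ (i : ℕ) (_ : i ≤ n), (fun ρ : ℕ → Q => ρ i) ⁻¹' {ext h i} := by
      ext ρ; simp [hCyl]
    rw [hrw]
    exact MeasurableSet.iInter fun i => MeasurableSet.iInter fun _ =>
      (measurable_pi_apply i) (measurableSet_singleton _)
  have hdisj : (T : Set (Fin (n+1) → Q)).PairwiseDisjoint Cyl := by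
    intro h1 _ h2 _ hne
    refine Set.disjoint_left.2 fun ρ hρ1 hρ2 => hne (funext fun j => ?_)
    have e1 := hρ1 j.val (by omega)
    have e2 := hρ2 j.val (by omega)
    have hj : ∀ h : Fin (n+1) → Q, ext h j.val = h j := by
      intro h
      show h ⟨min j.val n, _⟩ = h j
      congr 1
      exact Fin.ext (by simp; omega)
    rw [hj h1] at e1; rw [hj h2] at e2
    rw [← e1, ← e2]
  rw [hev, measure_biUnion_finset hdisj (fun h _ => hmeas h)]
  have hval : ∀ h : Fin (n+1) → Q,
      μ (Cyl h) = if h 0 = s then pp p s (List.ofFn (fun i : Fin n => h i.succ)) else 0 := by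
    intro h
    have hform := hμ.2 n (ext h)
    rw [hCyl] at *
    rw [hform]
    have h0 : ext h 0 = h 0 := by
      show h ⟨min 0 n, _⟩ = h 0
      congr 1
    have hlist : ((List.range n).map fun i => ext h (i+1)) =
        List.ofFn (fun i : Fin n => h i.succ) := by
      apply List.ext_getElem
      · simp
      · intro i hi1 hi2
        simp only [List.getElem_map, List.getElem_range, List.getElem_ofFn]
        have hin : i < n := by simpa using hi1
        show h ⟨min (i+1) n, _⟩ = _
        congr 1
        exact Fin.ext (by simp; omega)
    rw [h0, hlist, pathProb_pp M σ hm]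
  rw [Finset.sum_congr rfl (fun h _ => hval h)]
  rw [← FS_eq n Av s]
  rw [hT, Finset.sum_filter]
  rw [← Equiv.sum_comp (Fin.consEquiv (fun _ : Fin (n+1) => Q))
    (fun h => if (∀ i : Fin n, Av i (h i.succ)) then
      (if h 0 = s then pp p s (List.ofFn (fun i : Fin n => h i.succ)) else 0) else 0)]
  rw [Fintype.sum_prod_type]
  have hinner : ∀ (a : Q) (g : Fin n → Q),
      (Fin.consEquiv (fun _ : Fin (n+1) => Q)) (a, g) = Fin.cons a g := fun _ _ => rfl
  have hswap : ∀ a : Q, ∑ g : Fin n → Q,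
      (if (∀ i : Fin n, Av i ((Fin.cons a g : Fin (n+1) → Q) i.succ)) then
        (if (Fin.cons a g : Fin (n+1) → Q) 0 = s then
          pp p s (List.ofFn (fun i : Fin n => (Fin.cons a g : Fin (n+1) → Q) i.succ)) else 0)
        else 0)
      = ∑ g : Fin n → Q, (if a = s then
          (if (∀ i : Fin n, Av i (g i)) then pp p s (List.ofFn g) else 0) else 0) := by
    intro a
    apply Finset.sum_congr rfl
    intro g _
    simp only [Fin.cons_succ, Fin.cons_zero]
    split_ifs <;> rfl
  calc ∑ a : Q, ∑ g : Fin n → Q,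
        (fun h : Fin (n+1) → Q => if (∀ i : Fin n, Av i (h i.succ)) then
          (if h 0 = s then pp p s (List.ofFn (fun i : Fin n => h i.succ)) else 0) else 0)
          ((Fin.consEquiv (fun _ : Fin (n+1) => Q)) (a, g))
      = ∑ a : Q, ∑ g : Fin n → Q, (if a = s then
          (if (∀ i : Fin n, Av i (g i)) then pp p s (List.ofFn g) else 0) else 0) := by
        apply Finset.sum_congr rfl
        intro a _
        rw [← hswap a]
        apply Finset.sum_congr rfl
        intro g _
        rw [hinner a g]
    _ = ∑ g : Fin n → Q, if (∀ i : Fin n, Av i (g i)) then pp p s (List.ofFn g) else 0 := by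
        rw [Finset.sum_comm]
        apply Finset.sum_congr rfl
        intro g _
        rw [Finset.sum_ite_eq' Finset.univ s
          (fun _ => if (∀ i : Fin n, Av i (g i)) then pp p s (List.ofFn g) else 0)]
        simp

theorem rtg_chain {R : Q → Q → Prop} {a u : Q} (h : Relation.ReflTransGen R a u) :
    ∃ l : List Q, List.Chain R a l ∧ (a :: l).getLast (List.cons_ne_nil _ _) = u := by
  induction h using Relation.ReflTransGen.head_induction_on with
  | refl => exact ⟨[], List.Chain.nil, rfl⟩
  | head hr _ ih =>
    obtain ⟨l, hch, hlast⟩ := ih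
    refine ⟨_ :: l, List.chain_cons.2 ⟨hr, hch⟩, ?_⟩
    rw [List.getLast_cons (List.cons_ne_nil _ _)]
    exact hlast

end Aux

/-- Playing uniformly at random inside an end-component `U` (and uniformly on all
successors outside `U`) makes `U` exactly the set of states visited infinitely
often, almost surely, from every state of `U`. -/
theorem uniform_strategy_inf_eq_end_component [Fintype Q] [Nonempty Q]
    [MeasurableSpace Q] [MeasurableSingletonClass Q]
    (M : MDP Q) (U : Set Q) (hU : M.IsEndComponent U)
    (σU : Strategy M)
    (hmemless : ∀ h h' q, σU.act h q = σU.act h' q)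
    (hunif : ∀ (h : List Q) (s : Q), s ∈ M.Q1 → ∀ q' : Q,
      (σU.act h s) q' =
        if s ∈ U then
          (if M.E s q' ∧ q' ∈ U then
            ((Finset.univ.filter fun x => M.E s x ∧ x ∈ U).card : ℝ≥0∞)⁻¹ else 0)
        else
          (if M.E s q' then ((Finset.univ.filter fun x => M.E s x).card : ℝ≥0∞)⁻¹ else 0))
    (s : Q) (hs : s ∈ U) (μ : Measure (ℕ → Q)) (hμ : IsTrajMeasure M σU s μ) :
    μ {ρ | infSet ρ = U} = 1 := by
  haveI : IsProbabilityMeasure μ := hμ.1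
  set p : Q → Q → ℝ≥0∞ := fun a b => M.step σU [] a b with hpdef
  -- basic properties of the one-step kernel
  have hp1 : ∀ q, ∑ a, p q a = 1 := fun q => by
    rw [← tsum_fintype (L := SummationFilter.unconditional Q)]; exact (M.step σU [] q).tsum_coe
  have hple : ∀ a b, p a b ≤ 1 := fun a b => PMF.coe_le_one _ _
  have hzero : ∀ q ∈ U, ∀ a, a ∉ U → p q a = 0 := by
    intro q hq a ha
    show (M.step σU [] q) a = 0
    unfold MDP.step
    by_cases h1 : q ∈ M.Q1
    · rw [if_pos h1, hunif [] q h1 a, if_pos hq, if_neg (fun hc => ha hc.2)]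
    · rw [if_neg h1]
      by_contra hne
      exact ha (hU.2.1 q hq h1 (PMF.mem_support_iff _ _ |>.2 hne))
  have hcl : ∀ q ∈ U, ∀ a, p q a ≠ 0 → a ∈ U := by
    intro q hq a hne
    by_contra ha
    exact hne (hzero q hq a ha)
  have hpos : ∀ q ∈ U, ∀ a ∈ U, M.E q a → p q a ≠ 0 := by
    intro q hq a ha hE
    show (M.step σU [] q) a ≠ 0
    unfold MDP.step
    by_cases h1 : q ∈ M.Q1
    · rw [if_pos h1, hunif [] q h1 a, if_pos hq, if_pos ⟨hE, ha⟩]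
      refine ENNReal.inv_ne_zero.2 (ENNReal.natCast_ne_top _)
    · rw [if_neg h1]
      exact PMF.mem_support_iff _ _ |>.1 ((M.δ_support q h1 a).2 hE)
  -- a uniform lower bound on transition probabilities inside U
  set F : Finset (Q × Q) :=
    Finset.univ.filter (fun x : Q × Q => x.1 ∈ U ∧ x.2 ∈ U ∧ M.E x.1 x.2) with hF
  set ε : ℝ≥0∞ := min 1 (F.inf fun x => p x.1 x.2) with hε
  have hεpos : 0 < ε := by
    refine lt_min one_pos ?_
    rw [Finset.lt_inf_iff (show (0:ℝ≥0∞) < ⊤ by simp)]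
    intro x hx
    rw [hF, Finset.mem_filter] at hx
    exact pos_iff_ne_zero.2 (hpos x.1 hx.2.1 x.2 hx.2.2.1 hx.2.2.2)
  have hε1 : ε ≤ 1 := min_le_left _ _
  have hεle : ∀ q ∈ U, ∀ a ∈ U, M.E q a → ε ≤ p q a := by
    intro q hq a ha hE
    have hmemF : (q, a) ∈ F := by
      rw [hF, Finset.mem_filter]
      exact ⟨Finset.mem_univ _, hq, ha, hE⟩
    exact le_trans (min_le_right _ _) (Finset.inf_le hmemF)
  -- existence of a path inside U to any target
  have hpath : ∀ u ∈ U, ∀ q ∈ U, ∃ l : List Q, ∃ hne : l ≠ [],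
      l.getLast hne = u ∧ List.Chain (fun a b => a ∈ U ∧ b ∈ U ∧ M.E a b) q l := by
    intro u hu q hq
    obtain ⟨q1, hq1U, hE1⟩ := hU.2.2.1 q hq
    obtain ⟨l, hch, hlast⟩ := rtg_chain (hU.2.2.2 q1 hq1U u hu)
    exact ⟨q1 :: l, List.cons_ne_nil _ _, hlast,
      List.chain_cons.2 ⟨⟨hq, hq1U, hE1⟩, hch⟩⟩
  -- each state of U is visited at arbitrarily late times, a.s.
  have hio : ∀ u ∈ U, ∀ N : ℕ, μ {ρ | ∀ k, N + 1 ≤ k → ρ k ≠ u} = 0 := by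
    intro u hu N
    have hLp : ∀ q : Q, ∃ l : List Q, (q ∈ U → ∃ hne : l ≠ [],
        l.getLast hne = u ∧ List.Chain (fun a b => a ∈ U ∧ b ∈ U ∧ M.E a b) q l) := by
      intro q
      by_cases hq : q ∈ U
      · obtain ⟨l, hl⟩ := hpath u hu q hq
        exact ⟨l, fun _ => hl⟩
      · exact ⟨[q], fun hq' => absurd hq' hq⟩
    choose L hL using hLp
    set Nl : ℕ := Finset.univ.sup (fun q => (L q).length) with hNl
    set ε0 : ℝ≥0∞ := ε ^ Nl with hε0
    have hε0ne : ε0 ≠ 0 := pow_ne_zero _ hεpos.ne'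
    have hC : ∀ q ∈ U, gsum p (Aav u) q Nl ≤ 1 - ε0 := by
      intro q hq
      obtain ⟨hne, hlast, hch⟩ := hL q hq
      have hlen : (L q).length ≤ Nl := Finset.le_sup (f := fun q => (L q).length) (Finset.mem_univ q)
      obtain ⟨d, hd⟩ := Nat.exists_eq_add_of_le hlen
      have hmono : gsum p (Aav u) q Nl ≤ gsum p (Aav u) q (L q).length := by
        rw [hd]
        calc gsum p (Aav u) q ((L q).length + d)
            ≤ 1 * gsum p (Aav u) q (L q).length :=
              gsum_window hcl (fun a _ => gsum_le_one hp1 d _ a) _ q hq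
          _ = _ := one_mul _
      have hhit := gsum_hit hp1 hple u (L q) hne q (L q).length hlast le_rfl
      have hpp : ε0 ≤ pp p q (L q) := by
        have h1 : ε ^ (L q).length ≤ pp p q (L q) :=
          pp_ge_pow _ _ (List.IsChain.imp (fun a b hab => hεle a hab.1 b hab.2.1 hab.2.2) hch)
        have h2 : ε ^ Nl ≤ ε ^ (L q).length :=
          pow_le_pow_of_le_one zero_le hε1 hlen
        exact h2.trans h1
      calc gsum p (Aav u) q Nl ≤ gsum p (Aav u) q (L q).length := hmono
        _ ≤ 1 - pp p q (L q) := by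
            have hfin : pp p q (L q) ≠ ∞ :=
              (lt_of_le_of_lt (pp_le_one hple _ _) (by simp)).ne
            exact ENNReal.le_sub_of_add_le_right hfin hhit
        _ ≤ 1 - ε0 := tsub_le_tsub_left hpp 1
    have hK : ∀ K : ℕ, μ {ρ | ∀ k, N + 1 ≤ k → ρ k ≠ u} ≤ (1 - ε0) ^ K := by
      intro K
      have hsub : {ρ : ℕ → Q | ∀ k, N + 1 ≤ k → ρ k ≠ u} ⊆
          {ρ : ℕ → Q | ∀ i < N + Nl * K, (fun i a => N ≤ i → a ≠ u) i (ρ (i+1))} := by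
        intro ρ hρ i _ hNi
        exact hρ (i+1) (by omega)
      calc μ {ρ | ∀ k, N + 1 ≤ k → ρ k ≠ u}
          ≤ μ {ρ : ℕ → Q | ∀ i < N + Nl * K, (fun i a => N ≤ i → a ≠ u) i (ρ (i+1))} :=
            measure_mono hsub
        _ = gsum p (fun i a => N ≤ i → a ≠ u) s (N + Nl * K) := by
            rw [hpdef]
            exact bridge M σU hmemless s μ hμ (N + Nl * K) (fun i a => N ≤ i → a ≠ u)
        _ ≤ (1 - ε0) ^ K :=
            gsum_free hp1 hcl (gsum_window_pow hp1 hcl hC K) N s hs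
    have hlt1 : 1 - ε0 < 1 := ENNReal.sub_lt_self ENNReal.one_ne_top one_ne_zero hε0ne
    have htend := ENNReal.tendsto_pow_atTop_nhds_zero_of_lt_one hlt1
    exact le_zero_iff.1 (ge_of_tendsto htend (Filter.Eventually.of_forall hK))
  -- the play stays in U a.s.
  have hEn : ∀ n : ℕ, μ {ρ : ℕ → Q | ∀ i < n, ρ (i+1) ∈ U} = 1 := by
    intro n
    have := bridge M σU hmemless s μ hμ n (fun _ a => a ∈ U)
    rw [this]
    exact gsum_constU hp1 hzero n s hs
  have hEnMeas : ∀ n : ℕ, MeasurableSet {ρ : ℕ → Q | ∀ i < n, ρ (i+1) ∈ U} := by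
    intro n
    have : {ρ : ℕ → Q | ∀ i < n, ρ (i+1) ∈ U} =
        ⋂ (i : ℕ) (_ : i < n), (fun ρ : ℕ → Q => ρ (i+1)) ⁻¹' U := by
      ext ρ; simp
    rw [this]
    exact MeasurableSet.iInter fun i => MeasurableSet.iInter fun _ =>
      (measurable_pi_apply (i+1)) U.toFinite.measurableSet
  have hBMeas : ∀ (u : Q) (N : ℕ),
      MeasurableSet {ρ : ℕ → Q | ∀ k, N + 1 ≤ k → ρ k ≠ u} := by
    intro u N
    have : {ρ : ℕ → Q | ∀ k, N + 1 ≤ k → ρ k ≠ u} =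
        ⋂ (k : ℕ) (_ : N + 1 ≤ k), (fun ρ : ℕ → Q => ρ k) ⁻¹' {u}ᶜ := by
      ext ρ; simp
    rw [this]
    exact MeasurableSet.iInter fun k => MeasurableSet.iInter fun _ =>
      (measurable_pi_apply k) (measurableSet_singleton u).compl
  -- the bad set
  set Bad : Set (ℕ → Q) :=
    (⋃ n : ℕ, {ρ : ℕ → Q | ∀ i < n, ρ (i+1) ∈ U}ᶜ) ∪
      ⋃ (u : Q), ⋃ (_ : u ∈ U), ⋃ (N : ℕ), {ρ : ℕ → Q | ∀ k, N + 1 ≤ k → ρ k ≠ u}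
    with hBad
  have hBadMeas : MeasurableSet Bad := by
    refine MeasurableSet.union ?_ ?_
    · exact MeasurableSet.iUnion fun n => (hEnMeas n).compl
    · exact MeasurableSet.iUnion fun u => MeasurableSet.iUnion fun hu =>
        MeasurableSet.iUnion fun N => hBMeas u N
  have hBadNull : μ Bad = 0 := by
    refine measure_union_null ?_ ?_
    · refine measure_iUnion_null fun n => ?_
      exact (prob_compl_eq_zero_iff (hEnMeas n)).2 (hEn n)
    · exact measure_iUnion_null fun u => measure_iUnion_null fun hu =>
        measure_iUnion_null fun N => hio u hu N
  have hGood : μ Badᶜ = 1 := (prob_compl_eq_one_iff hBadMeas).2 hBadNull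
  have hsub : Badᶜ ⊆ {ρ | infSet ρ = U} := by
    intro ρ hρ
    rw [hBad, Set.compl_union] at hρ
    obtain ⟨hρ1, hρ2⟩ := hρ
    have hInU : ∀ i : ℕ, ρ (i+1) ∈ U := by
      intro i
      have h1 : ρ ∉ ⋃ n : ℕ, {ρ : ℕ → Q | ∀ j < n, ρ (j+1) ∈ U}ᶜ := hρ1
      simp only [Set.mem_iUnion, not_exists] at h1
      exact (Set.notMem_compl_iff.1 (h1 (i+1))) i (by omega)
    have hUio : ∀ u ∈ U, ∀ N : ℕ, ∃ n, N ≤ n ∧ ρ n = u := by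
      intro u hu N
      have h2 : ρ ∉ ⋃ (u : Q), ⋃ (_ : u ∈ U), ⋃ (N : ℕ),
          {ρ : ℕ → Q | ∀ k, N + 1 ≤ k → ρ k ≠ u} := hρ2
      simp only [Set.mem_iUnion, not_exists] at h2
      have h3 : ¬ ∀ k, N + 1 ≤ k → ρ k ≠ u := h2 u hu N
      push_neg at h3
      obtain ⟨k, hk1, hk2⟩ := h3
      exact ⟨k, by omega, hk2⟩
    show infSet ρ = U
    apply Set.Subset.antisymm
    · intro v hv
      obtain ⟨n, hn1, hn2⟩ := hv 1
      obtain ⟨i, rfl⟩ : ∃ i, n = i + 1 := ⟨n - 1, by omega⟩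
      rw [← hn2]
      exact hInU i
    · intro u hu N
      exact hUio u hu N
  refine le_antisymm prob_le_one ?_
  rw [← hGood]
  exact measure_mono hsub

end MPP
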